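/- For every real b > 1/2 there exists a unique μ†(b) > 0 such that exp(μ†(b)) = 1 + μ†(b) + b·μ†(b)², and for every μ > 0, exp(μ) > 1 + μ + b·μ² holds if and only if μ > μ†(b). Moreover, for b = 2/3 (the case n = 2) the root satisfies 0.80 < μ†(2/3) < 0.81, and for b = 1 (the case n = 1) it satisfies 1.79 < μ†(1) < 1.80. -/

import Mathlib

open Real Set

/-- If `f 0 = 0` and `f' > 0` on positives, then `f > 0` on positives. -/
lemma pos_of_deriv_pos {f f' : ℝ → ℝ} (hf : ∀ x, HasDerivAt f (f' x) x)
    (h0 : f 0 = 0) (hpos : ∀ x > 0, 0 < f' x) : ∀ x > 0, 0 < f x := by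
  have hmono : StrictMonoOn f (Ici (0:ℝ)) := by
    apply strictMonoOn_of_deriv_pos (convex_Ici 0)
    · exact (continuous_iff_continuousAt.2 fun x => (hf x).continuousAt).continuousOn
    · intro x hx
      rw [interior_Ici] at hx
      rw [(hf x).deriv]
      exact hpos x hx
  intro x hx
  have := hmono (le_refl (0:ℝ)) (le_of_lt hx) hx
  simpa [h0] using this

lemma h_aux_pos : ∀ x > 0, 0 < (x - 2) * Real.exp x + x + 2 := by
  have h1 : ∀ x > 0, 0 < (x - 1) * Real.exp x + 1 := by
    apply pos_of_deriv_pos (f' := fun x => x * Real.exp x)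
    · intro x
      have : HasDerivAt (fun x : ℝ => (x - 1) * Real.exp x + 1)
          ((1 : ℝ) * Real.exp x + (x - 1) * Real.exp x) x := by
        exact (((hasDerivAt_id x).sub_const 1).mul (Real.hasDerivAt_exp x)).add_const 1
      convert this using 1; ring
    · simp
    · intro x hx; positivity
  apply pos_of_deriv_pos (f' := fun x => (x - 1) * Real.exp x + 1)
  · intro x
    have : HasDerivAt (fun x : ℝ => (x - 2) * Real.exp x + x + 2)
        (((1 : ℝ) * Real.exp x + (x - 2) * Real.exp x) + 1) x := by
      exact ((((hasDerivAt_id x).sub_const 2).mul (Real.hasDerivAt_exp x)).add (hasDerivAt_id x)).add_const 2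
    convert this using 1; ring
  · simp
  · exact h1

noncomputable def gfun (x : ℝ) : ℝ := (Real.exp x - 1 - x) / x ^ 2

lemma gfun_hasDerivAt {x : ℝ} (hx : 0 < x) :
    HasDerivAt gfun ((x * ((x - 2) * Real.exp x + x + 2)) / (x ^ 2) ^ 2) x := by
  have hnum : HasDerivAt (fun x : ℝ => Real.exp x - 1 - x) (Real.exp x - 1) x := by
    exact (((Real.hasDerivAt_exp x).sub_const 1).sub (hasDerivAt_id' x))
  have hden : HasDerivAt (fun x : ℝ => x ^ 2) (2 * x) x := by
    simpa using hasDerivAt_pow 2 x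
  have h := hnum.div hden (by positivity)
  convert h using 1
  · rfl
  · rfl
  · rfl
  · ring

lemma gfun_strictMono : StrictMonoOn gfun (Ioi (0:ℝ)) := by
  apply strictMonoOn_of_deriv_pos (convex_Ioi 0)
  · apply ContinuousOn.div
    · fun_prop
    · fun_prop
    · intro x hx; have : (0:ℝ) < x := hx; positivity
  · intro x hx
    rw [interior_Ioi] at hx
    rw [(gfun_hasDerivAt hx).deriv]
    have hx' : (0:ℝ) < x := hx
    have h1 := h_aux_pos x hx
    have h4 : (0:ℝ) < (x ^ 2) ^ 2 := by positivity
    exact div_pos (mul_pos hx h1) h4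

lemma gfun_eq {b μ : ℝ} (hμ : 0 < μ) :
    (Real.exp μ = 1 + μ + b * μ ^ 2 ↔ gfun μ = b) ∧
    (Real.exp μ > 1 + μ + b * μ ^ 2 ↔ gfun μ > b) := by
  have h2 : (0:ℝ) < μ ^ 2 := by positivity
  unfold gfun
  constructor
  · rw [div_eq_iff (ne_of_gt h2)]
    constructor <;> intro h <;> linarith
  · rw [gt_iff_lt, gt_iff_lt, lt_div_iff₀ h2]
    constructor <;> intro h <;> nlinarith

lemma gfun_contOn : ContinuousOn gfun (Ioi (0:ℝ)) := by
  apply ContinuousOn.div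
  · fun_prop
  · fun_prop
  · intro x hx; have : (0:ℝ) < x := hx; positivity

lemma gfun_small {x : ℝ} (h0 : 0 < x) (h1 : x ≤ 1) : gfun x ≤ 1 / 2 + x := by
  have hb := Real.exp_bound' (le_of_lt h0) h1 (n := 3) (by norm_num)
  have hb' : Real.exp x ≤ 1 + x + x ^ 2 / 2 + 2 / 9 * x ^ 3 := by
    rw [show (3:ℕ) = 2 + 1 from rfl] at hb
    simp [Finset.sum_range_succ, Nat.factorial] at hb
    nlinarith [hb]
  have h2 : (0:ℝ) < x ^ 2 := by positivity
  unfold gfun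
  rw [div_le_iff₀ h2]
  nlinarith

lemma gfun_big {b : ℝ} (hb : 1 / 2 < b) : b < gfun (6 * b + 1) := by
  have hx : (0:ℝ) < 6 * b + 1 := by linarith
  have hlb := Real.sum_le_exp_of_nonneg (le_of_lt hx) 4
  norm_num [Finset.sum_range_succ, Nat.factorial] at hlb
  have h2 : (0:ℝ) < (6 * b + 1) ^ 2 := by positivity
  unfold gfun
  rw [lt_div_iff₀ h2]
  nlinarith [hlb, h2, sq_nonneg (6 * b + 1)]

lemma exp_ub8 {x : ℝ} (h0 : 0 ≤ x) (h1 : x ≤ 1) :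
    Real.exp x ≤ 1 + x + x ^ 2 / 2 + x ^ 3 / 6 + x ^ 4 / 24 + x ^ 5 / 120 + x ^ 6 / 720
      + x ^ 7 / 5040 + x ^ 8 * 9 / 322560 := by
  have hb := Real.exp_bound' h0 h1 (n := 8) (by norm_num)
  rw [show (8:ℕ) = 7+1 from rfl] at hb
  simp [Finset.sum_range_succ, Nat.factorial] at hb
  nlinarith [hb]

lemma exp_lb8 {x : ℝ} (h0 : 0 ≤ x) :
    1 + x + x ^ 2 / 2 + x ^ 3 / 6 + x ^ 4 / 24 + x ^ 5 / 120 + x ^ 6 / 720 + x ^ 7 / 5040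
      ≤ Real.exp x := by
  have hb := Real.sum_le_exp_of_nonneg h0 8
  rw [show (8:ℕ) = 7+1 from rfl] at hb
  simp [Finset.sum_range_succ, Nat.factorial] at hb
  nlinarith [hb]

lemma exp08_lt : Real.exp (4/5) < 167/75 := by
  have := exp_ub8 (x := 4/5) (by norm_num) (by norm_num)
  nlinarith [this]

lemma exp081_gt : (11237/5000 : ℝ) < Real.exp (81/100) := by
  have := exp_lb8 (x := 81/100) (by norm_num)
  nlinarith [this]

lemma exp179_lt : Real.exp (179/100) < 59941/10000 := by
  have h := exp_ub8 (x := 179/200) (by norm_num) (by norm_num)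
  have he : Real.exp (179/100) = Real.exp (179/200) * Real.exp (179/200) := by
    rw [← Real.exp_add]; norm_num
  have hpos := Real.exp_pos (179/200 : ℝ)
  rw [he]
  nlinarith [h, hpos]

lemma exp18_gt : (151/25 : ℝ) < Real.exp (9/5) := by
  have h := exp_lb8 (x := 9/10) (by norm_num)
  have he : Real.exp (9/5) = Real.exp (9/10) * Real.exp (9/10) := by
    rw [← Real.exp_add]; norm_num
  have hpos := Real.exp_pos (9/10 : ℝ)
  rw [he]
  nlinarith [h, hpos]

/-- **Lemma C.1, parts (ii)–(iii).** For every real `b > 1/2` there is a unique `μ†(b) > 0`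
with `e^{μ†} = 1 + μ† + b μ†²`, and for every `μ > 0`, `e^μ > 1 + μ + b μ² ↔ μ > μ†(b)`.
Moreover for `b = 2/3` (case `n = 2`) the root lies in `(0.80, 0.81)`, and for `b = 1`
(case `n = 1`) it lies in `(1.79, 1.80)`. -/
theorem quadratic_threshold_roots :
    (∀ b : ℝ, 1 / 2 < b →
      ∃ μd : ℝ, 0 < μd ∧ Real.exp μd = 1 + μd + b * μd ^ 2 ∧
        (∀ y : ℝ, 0 < y → Real.exp y = 1 + y + b * y ^ 2 → y = μd) ∧
        (∀ μ : ℝ, 0 < μ → (Real.exp μ > 1 + μ + b * μ ^ 2 ↔ μd < μ))) ∧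
    (∀ μd : ℝ, 0 < μd → Real.exp μd = 1 + μd + (2 / 3) * μd ^ 2 →
      0.80 < μd ∧ μd < 0.81) ∧
    (∀ μd : ℝ, 0 < μd → Real.exp μd = 1 + μd + 1 * μd ^ 2 →
      1.79 < μd ∧ μd < 1.80) := by
  refine ⟨?_, ?_, ?_⟩
  · intro b hb
    -- endpoints for IVT
    set x0 : ℝ := min ((b - 1 / 2) / 2) 1 with hx0def
    have hx0pos : 0 < x0 := lt_min (by linarith) one_pos
    have hx0le1 : x0 ≤ 1 := min_le_right _ _
    have hgx0 : gfun x0 < b := by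
      have h := gfun_small hx0pos hx0le1
      have : x0 ≤ (b - 1 / 2) / 2 := min_le_left _ _
      linarith
    set x1 : ℝ := 6 * b + 1 with hx1def
    have hgx1 : b < gfun x1 := gfun_big hb
    have hx01 : x0 ≤ x1 := by
      have : x0 ≤ 1 := hx0le1
      have : (1:ℝ) ≤ 6 * b + 1 := by linarith
      linarith
    have hsub : Icc x0 x1 ⊆ Ioi (0:ℝ) := fun z hz => lt_of_lt_of_le hx0pos hz.1
    have hivt := intermediate_value_Icc hx01 (gfun_contOn.mono hsub)
    have hbmem : b ∈ Icc (gfun x0) (gfun x1) := ⟨le_of_lt hgx0, le_of_lt hgx1⟩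
    obtain ⟨μd, hμdmem, hμdval⟩ := hivt hbmem
    have hμdpos : 0 < μd := lt_of_lt_of_le hx0pos hμdmem.1
    refine ⟨μd, hμdpos, ?_, ?_, ?_⟩
    · exact (gfun_eq (b := b) hμdpos).1.mpr hμdval
    · intro y hy hyeq
      have hgy : gfun y = b := (gfun_eq (b := b) hy).1.mp hyeq
      exact gfun_strictMono.injOn (Set.mem_Ioi.mpr hy) (Set.mem_Ioi.mpr hμdpos)
        (by rw [hgy, hμdval])
    · intro μ hμ
      rw [(gfun_eq (b := b) hμ).2]
      rw [← hμdval]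
      exact gfun_strictMono.lt_iff_lt (Set.mem_Ioi.mpr hμdpos) (Set.mem_Ioi.mpr hμ)
  · intro μd hμd heq
    have hg : gfun μd = 2 / 3 := (gfun_eq (b := (2:ℝ)/3) hμd).1.mp heq
    have h08 : gfun (4/5 : ℝ) < 2 / 3 := by
      have := exp08_lt
      unfold gfun
      rw [div_lt_iff₀ (by norm_num : (0:ℝ) < (4/5:ℝ)^2)]
      nlinarith [this]
    have h081 : (2:ℝ) / 3 < gfun (81/100 : ℝ) := by
      have := exp081_gt
      unfold gfun
      rw [lt_div_iff₀ (by norm_num : (0:ℝ) < (81/100:ℝ)^2)]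
      nlinarith [this]
    constructor
    · by_contra hle
      push_neg at hle
      have : gfun μd ≤ gfun (4/5 : ℝ) :=
        gfun_strictMono.monotoneOn (Set.mem_Ioi.mpr hμd) (by norm_num)
          (by norm_num at hle ⊢; linarith)
      rw [hg] at this; linarith
    · by_contra hle
      push_neg at hle
      have : gfun (81/100 : ℝ) ≤ gfun μd :=
        gfun_strictMono.monotoneOn (by norm_num) (Set.mem_Ioi.mpr hμd)
          (by norm_num at hle ⊢; linarith)
      rw [hg] at this; linarith
  · intro μd hμd heq
    have hg : gfun μd = 1 := (gfun_eq (b := (1:ℝ)) hμd).1.mp heq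
    have h179 : gfun (179/100 : ℝ) < 1 := by
      have := exp179_lt
      unfold gfun
      rw [div_lt_iff₀ (by norm_num : (0:ℝ) < (179/100:ℝ)^2)]
      nlinarith [this]
    have h18 : (1:ℝ) < gfun (9/5 : ℝ) := by
      have := exp18_gt
      unfold gfun
      rw [lt_div_iff₀ (by norm_num : (0:ℝ) < (9/5:ℝ)^2)]
      nlinarith [this]
    constructor
    · by_contra hle
      push_neg at hle
      have : gfun μd ≤ gfun (179/100 : ℝ) :=
        gfun_strictMono.monotoneOn (Set.mem_Ioi.mpr hμd) (by norm_num)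
          (by norm_num at hle ⊢; linarith)
      rw [hg] at this; linarith
    · by_contra hle
      push_neg at hle
      have : gfun (9/5 : ℝ) ≤ gfun μd :=
        gfun_strictMono.monotoneOn (by norm_num) (Set.mem_Ioi.mpr hμd)
          (by norm_num at hle ⊢; linarith)
      rw [hg] at this; linarith
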